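/- If a real Banach space X has property (su), then every closed linear subspace Y of X also has property (su). -/

import Mathlib

open Filter Topology

noncomputable section

variable {E : Type*} [NormedAddCommGroup E] [NormedSpace ℝ E]

/-- A subset of a normed space is weakly compact if its image under the identity
map into the weak space is compact in the weak topology. -/
def IsWeaklyCompact (C : Set E) : Prop :=
  IsCompact (toWeakSpace ℝ E '' C)

/-- `z` is the weak limit of the sequence `x`. -/
def WeakLim (x : ℕ → E) (z : E) : Prop :=
  ∀ f : StrongDual ℝ E, Tendsto (fun n => f (x n)) atTop (𝓝 (f z))

/-- The sequence `x` is weakly Cauchy: `(f (x n))` converges for every functional `f`. -/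
def WeakCauchySeq (x : ℕ → E) : Prop :=
  ∀ f : StrongDual ℝ E, ∃ l : ℝ, Tendsto (fun n => f (x n)) atTop (𝓝 l)

/-- `f` is affine on the convex set `K`. -/
def AffineOn (K : Set E) (f : E → E) : Prop :=
  ∀ x ∈ K, ∀ y ∈ K, ∀ t : ℝ, 0 ≤ t → t ≤ 1 →
    f (t • x + (1 - t) • y) = t • f x + (1 - t) • f y

/-- `f` is `L`-bi-Lipschitz on `K`. -/
def IsBiLipschitzOn (L : ℝ) (K : Set E) (f : E → E) : Prop :=
  ∃ c₁ c₂ : ℝ, 0 < c₁ ∧ 0 < c₂ ∧ c₂ / c₁ ≤ L ∧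
    ∀ x ∈ K, ∀ y ∈ K,
      c₁ * ‖x - y‖ ≤ ‖f x - f y‖ ∧ ‖f x - f y‖ ≤ c₂ * ‖x - y‖

/-- `f` is uniformly bi-Lipschitz on `K` (all iterates are bi-Lipschitz with the
same constants). -/
def UnifBiLipschitzOn (K : Set E) (f : E → E) : Prop :=
  ∃ c₁ c₂ : ℝ, 0 < c₁ ∧ 0 < c₂ ∧
    ∀ p : ℕ, ∀ x ∈ K, ∀ y ∈ K,
      c₁ * ‖x - y‖ ≤ ‖f^[p] x - f^[p] y‖ ∧ ‖f^[p] x - f^[p] y‖ ≤ c₂ * ‖x - y‖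

/-- `f` is uniformly Lipschitz on `K`. -/
def UnifLipschitzOn (K : Set E) (f : E → E) : Prop :=
  ∃ L : ℝ, 0 < L ∧ ∀ p : ℕ, ∀ x ∈ K, ∀ y ∈ K,
    ‖f^[p] x - f^[p] y‖ ≤ L * ‖x - y‖

/-- `θ(f) = inf { liminf_n ‖x - fⁿ(y)‖ : x, y ∈ K }`. -/
def fpTheta (K : Set E) (f : E → E) : ℝ :=
  sInf {r : ℝ | ∃ x ∈ K, ∃ y ∈ K, r = Filter.liminf (fun n => ‖x - f^[n] y‖) atTop}

/-- `x` is a basic sequence with basis constant `𝒦`. -/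
def IsBasicSeq (x : ℕ → E) (𝒦 : ℝ) : Prop :=
  (∀ n, x n ≠ 0) ∧ 1 ≤ 𝒦 ∧
    ∀ m n : ℕ, m ≤ n → ∀ a : ℕ → ℝ,
      ‖∑ i ∈ Finset.range m, a i • x i‖ ≤ 𝒦 * ‖∑ i ∈ Finset.range n, a i • x i‖

/-- `x` is seminormalized. -/
def Seminormalized (x : ℕ → E) : Prop :=
  ∃ a b : ℝ, 0 < a ∧ ∀ n, a ≤ ‖x n‖ ∧ ‖x n‖ ≤ b

/-- `x` dominates the summing basis of `c₀` with constant `c`. -/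
def DominatesSummingBasis (x : ℕ → E) (c : ℝ) : Prop :=
  ∀ m : ℕ, ∀ a : ℕ → ℝ, ∀ k ≤ m,
    c * |∑ i ∈ Finset.Icc k m, a i| ≤ ‖∑ i ∈ Finset.range (m + 1), a i • x i‖

/-- `x` is a wide-(s) sequence. -/
def IsWideS (x : ℕ → E) : Prop :=
  Seminormalized x ∧ (∃ 𝒦, IsBasicSeq x 𝒦) ∧ ∃ c > 0, DominatesSummingBasis x c

/-- `x` is equivalent to the summing basis of `c₀`. -/
def EquivSummingBasis (x : ℕ → E) : Prop :=
  ∃ L : ℝ, 1 ≤ L ∧ ∀ m : ℕ, ∀ a : ℕ → ℝ,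
    (∀ k ≤ m, (1 / L) * |∑ i ∈ Finset.Icc k m, a i| ≤
      ‖∑ i ∈ Finset.range (m + 1), a i • x i‖) ∧
    ‖∑ i ∈ Finset.range (m + 1), a i • x i‖ ≤
      L * (Finset.range (m + 1)).sup' Finset.nonempty_range_add_one
        (fun k => |∑ i ∈ Finset.Icc k m, a i|)

/-- `x` is an `ℓ₁`-sequence. -/
def IsL1Seq (x : ℕ → E) : Prop :=
  ∃ c C : ℝ, 0 < c ∧ 0 < C ∧ ∀ m : ℕ, ∀ a : ℕ → ℝ,
    c * ∑ i ∈ Finset.range m, |a i| ≤ ‖∑ i ∈ Finset.range m, a i • x i‖ ∧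
    ‖∑ i ∈ Finset.range m, a i • x i‖ ≤ C * ∑ i ∈ Finset.range m, |a i|

/-- `w` is a convex block sequence of `x`. -/
def IsConvexBlockSeq (w x : ℕ → E) : Prop :=
  ∃ (F : ℕ → Finset ℕ) (lam : ℕ → ℝ),
    (∀ j, (F j).Nonempty) ∧
    (∀ j, ∀ i ∈ F j, ∀ i' ∈ F (j + 1), i < i') ∧
    (∀ i, 0 ≤ lam i) ∧
    (∀ j, ∑ i ∈ F j, lam i = 1) ∧
    (∀ j, w j = ∑ i ∈ F j, lam i • x i)

/-- Sequences `u` and `v` are `L`-equivalent. -/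
def SeqEquiv (L : ℝ) (u v : ℕ → E) : Prop :=
  ∀ m : ℕ, ∀ a : ℕ → ℝ,
    (1 / L) * ‖∑ i ∈ Finset.range m, a i • u i‖ ≤ ‖∑ i ∈ Finset.range m, a i • v i‖ ∧
    ‖∑ i ∈ Finset.range m, a i • v i‖ ≤ L * ‖∑ i ∈ Finset.range m, a i • u i‖

/-- `w` is uniformly `L`-shift equivalent: each shifted sequence `(w (n + p))ₙ`
is `L`-equivalent to `w`. -/
def UnifShiftEquiv (L : ℝ) (w : ℕ → E) : Prop :=
  ∀ p : ℕ, SeqEquiv L (fun n => w (n + p)) w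

/-- A basic sequence is convex block shiftable if some subsequence has all of its
convex block sequences uniformly `L`-shift equivalent, for a single `L`. -/
def ConvexBlockShiftable (x : ℕ → E) : Prop :=
  (∃ 𝒦, IsBasicSeq x 𝒦) ∧
  ∃ L : ℝ, 0 < L ∧ ∃ φ : ℕ → ℕ, StrictMono φ ∧
    ∀ w : ℕ → E, IsConvexBlockSeq w (x ∘ φ) → UnifShiftEquiv L w

/-- Pełczyński's property (u). -/
def PropertyU (E : Type*) [NormedAddCommGroup E] [NormedSpace ℝ E] : Prop :=
  ∀ x : ℕ → E, WeakCauchySeq x →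
    ∃ y : ℕ → E,
      (∀ f : StrongDual ℝ E, Summable fun n => |f (y n)|) ∧
      WeakLim (fun n => x n - ∑ i ∈ Finset.range (n + 1), y i) 0

/-- Property (su). -/
def PropertySU (E : Type*) [NormedAddCommGroup E] [NormedSpace ℝ E] : Prop :=
  ∀ x : ℕ → E, WeakCauchySeq x → ¬(∃ z, WeakLim x z) →
    ∃ w : ℕ → E, ConvexBlockShiftable w ∧ WeakLim (fun n => x n - w n) 0


namespace SU14


/-- Mazur-type lemma. -/
lemma mazur {z : ℕ → E} (hz : WeakLim z 0) {ε : ℝ} (hε : 0 < ε) (N : ℕ) :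
    ∃ (F : Finset ℕ) (lam : ℕ → ℝ), F.Nonempty ∧ (∀ i ∈ F, N ≤ i) ∧
      (∀ i, 0 ≤ lam i) ∧ (∑ i ∈ F, lam i = 1) ∧ ‖∑ i ∈ F, lam i • z i‖ ≤ ε := by
  classical
  set S : Set E := Set.range (fun i => z (N + i)) with hS
  have h0 : (0 : E) ∈ closure (convexHull ℝ S) := by
    by_contra h0
    obtain ⟨f, u, hfu, hu⟩ := geometric_hahn_banach_closed_point
      ((convex_convexHull ℝ S).closure) isClosed_closure h0
    rw [map_zero] at hu
    have hlim : Tendsto (fun n => f (z n)) atTop (𝓝 0) := by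
      have := hz f; rwa [map_zero] at this
    obtain ⟨n, hn, hnN⟩ :=
      ((hlim.eventually (eventually_gt_nhds hu)).and (eventually_ge_atTop N)).exists
    have hmem : z n ∈ closure (convexHull ℝ S) := by
      apply subset_closure
      apply subset_convexHull
      exact ⟨n - N, by simp [Nat.add_sub_cancel' hnN]⟩
    exact absurd (hfu _ hmem) (not_lt.2 hn.le)
  obtain ⟨p, hp, hpd⟩ := Metric.mem_closure_iff.1 h0 ε hε
  rw [convexHull_eq] at hp
  obtain ⟨ι, t, w, q, hw0, hw1, hqS, hcm⟩ := hp
  have hcm' : ∑ i ∈ t, w i • q i = p := by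
    rw [← hcm, Finset.centerMass_eq_of_sum_1 _ _ hw1]
  -- choose indices
  have hidx : ∀ i ∈ t, ∃ n : ℕ, N ≤ n ∧ z n = q i := by
    intro i hi
    obtain ⟨m, hm⟩ := hqS i hi
    exact ⟨N + m, Nat.le_add_right _ _, hm⟩
  set k : ι → ℕ := fun i => if h : ∃ n : ℕ, N ≤ n ∧ z n = q i then h.choose else 0 with hk
  have hkspec : ∀ i ∈ t, N ≤ k i ∧ z (k i) = q i := by
    intro i hi
    have h := hidx i hi
    simp only [hk, dif_pos h]
    exact h.choose_spec
  set F : Finset ℕ := t.image k with hF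
  set lam : ℕ → ℝ := fun m => ∑ i ∈ t.filter (fun i => k i = m), w i with hlam
  refine ⟨F, lam, ?_, ?_, ?_, ?_, ?_⟩
  · -- nonempty : t nonempty since sum of w = 1
    have : t.Nonempty := by
      by_contra h
      rw [Finset.not_nonempty_iff_eq_empty] at h
      simp [h] at hw1
    exact this.image k
  · intro m hm
    obtain ⟨i, hi, rfl⟩ := Finset.mem_image.1 hm
    exact (hkspec i hi).1
  · intro m
    exact Finset.sum_nonneg fun i hi => hw0 i (Finset.mem_filter.1 hi).1
  · rw [hlam, Finset.sum_fiberwise_of_maps_to (fun i hi => Finset.mem_image_of_mem k hi) w]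
    exact hw1
  · have : ∑ m ∈ F, lam m • z m = p := by
      rw [← hcm']
      rw [← Finset.sum_fiberwise_of_maps_to (fun i hi => Finset.mem_image_of_mem k hi)
        (fun i => w i • q i)]
      apply Finset.sum_congr rfl
      intro m _
      rw [hlam, Finset.sum_smul]
      apply Finset.sum_congr rfl
      intro i hi
      obtain ⟨hit, hkim⟩ := Finset.mem_filter.1 hi
      rw [← (hkspec i hit).2, hkim]
    rw [this]
    have := hpd
    rw [dist_comm, dist_zero_right] at this
    exact this.le



lemma blocks_lt {F : ℕ → Finset ℕ} (hne : ∀ j, (F j).Nonempty)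
    (hinc : ∀ j, ∀ i ∈ F j, ∀ i' ∈ F (j+1), i < i') :
    ∀ {j j' : ℕ}, j < j' → ∀ i ∈ F j, ∀ i' ∈ F j', i < i' := by
  intro j j' h
  induction j', h using Nat.le_induction with
  | base => exact fun i hi i' hi' => hinc j i hi i' hi'
  | succ j' hj IH =>
    intro i hi i' hi'
    obtain ⟨i₀, hi₀⟩ := hne j'
    exact (IH i hi i₀ hi₀).trans (hinc j' i₀ hi₀ i' hi')

lemma blocks_ge {F : ℕ → Finset ℕ} (hne : ∀ j, (F j).Nonempty)
    (hinc : ∀ j, ∀ i ∈ F j, ∀ i' ∈ F (j+1), i < i') :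
    ∀ j, ∀ i ∈ F j, j ≤ i := by
  intro j
  induction j with
  | zero => exact fun i _ => Nat.zero_le i
  | succ j IH =>
    intro i hi
    obtain ⟨i₀, hi₀⟩ := hne j
    exact (IH i₀ hi₀).trans_lt (hinc j i₀ hi₀ i hi)

lemma seqEquiv_symm {L : ℝ} (hL : 0 < L) {u v : ℕ → E} (h : SeqEquiv L u v) :
    SeqEquiv L v u := by
  intro m a
  obtain ⟨h1, h2⟩ := h m a
  constructor
  · calc (1/L) * ‖∑ i ∈ Finset.range m, a i • v i‖
        ≤ (1/L) * (L * ‖∑ i ∈ Finset.range m, a i • u i‖) :=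
          mul_le_mul_of_nonneg_left h2 (by positivity)
      _ = ‖∑ i ∈ Finset.range m, a i • u i‖ := by field_simp
  · calc ‖∑ i ∈ Finset.range m, a i • u i‖
        = L * ((1/L) * ‖∑ i ∈ Finset.range m, a i • u i‖) := by field_simp
      _ ≤ L * ‖∑ i ∈ Finset.range m, a i • v i‖ := mul_le_mul_of_nonneg_left h1 hL.le

lemma seqEquiv_trans {L M : ℝ} (hL : 0 < L) (hM : 0 < M) {u v w : ℕ → E}
    (h1 : SeqEquiv L u v) (h2 : SeqEquiv M v w) : SeqEquiv (L * M) u w := by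
  intro m a
  obtain ⟨h11, h12⟩ := h1 m a
  obtain ⟨h21, h22⟩ := h2 m a
  constructor
  · calc (1/(L*M)) * ‖∑ i ∈ Finset.range m, a i • u i‖
        = (1/M) * ((1/L) * ‖∑ i ∈ Finset.range m, a i • u i‖) := by ring
      _ ≤ (1/M) * ‖∑ i ∈ Finset.range m, a i • v i‖ :=
          mul_le_mul_of_nonneg_left h11 (by positivity)
      _ ≤ ‖∑ i ∈ Finset.range m, a i • w i‖ := h21
  · calc ‖∑ i ∈ Finset.range m, a i • w i‖ ≤ M * ‖∑ i ∈ Finset.range m, a i • v i‖ := h22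
      _ ≤ M * (L * ‖∑ i ∈ Finset.range m, a i • u i‖) :=
        mul_le_mul_of_nonneg_left h12 hM.le
      _ = (L * M) * ‖∑ i ∈ Finset.range m, a i • u i‖ := by ring

lemma cbs_shift (c : ℕ → E) (p : ℕ) : IsConvexBlockSeq (fun n => c (n + p)) c := by
  refine ⟨fun j => {j + p}, fun _ => 1, fun j => ⟨j + p, Finset.mem_singleton_self _⟩,
    ?_, fun _ => zero_le_one, by simp, by simp⟩
  intro j i hi i' hi'
  rw [Finset.mem_singleton] at hi hi'
  omega

lemma cbs_subseq (c : ℕ → E) {φ : ℕ → ℕ} (hφ : StrictMono φ) :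
    IsConvexBlockSeq (fun n => c (φ n)) c := by
  refine ⟨fun j => {φ j}, fun _ => 1, fun j => ⟨φ j, Finset.mem_singleton_self _⟩,
    ?_, fun _ => zero_le_one, by simp, by simp⟩
  intro j i hi i' hi'
  rw [Finset.mem_singleton] at hi hi'
  subst hi; subst hi'
  exact hφ (Nat.lt_succ_self j)

lemma cbs_trans {a b c : ℕ → E} (hab : IsConvexBlockSeq a b) (hbc : IsConvexBlockSeq b c) :
    IsConvexBlockSeq a c := by
  classical
  obtain ⟨G, mu, hGne, hGinc, hmu0, hmu1, hadef⟩ := hab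
  obtain ⟨F, lam, hFne, hFinc, hlam0, hlam1, hbdef⟩ := hbc
  -- new blocks
  refine ⟨fun k => (G k).biUnion F,
    fun i => if h : ∃ j, i ∈ F j then mu h.choose * lam i else 0, ?_, ?_, ?_, ?_, ?_⟩
  · intro k
    obtain ⟨j, hj⟩ := hGne k
    obtain ⟨i, hi⟩ := hFne j
    exact ⟨i, Finset.mem_biUnion.2 ⟨j, hj, hi⟩⟩
  · intro k i hi i' hi'
    obtain ⟨j, hj, hij⟩ := Finset.mem_biUnion.1 hi
    obtain ⟨j', hj', hij'⟩ := Finset.mem_biUnion.1 hi'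
    have : j < j' := hGinc k j hj j' hj'
    exact blocks_lt hFne hFinc this i hij i' hij'
  · intro i
    dsimp only
    by_cases h : ∃ j, i ∈ F j
    · rw [dif_pos h]; exact mul_nonneg (hmu0 _) (hlam0 i)
    · rw [dif_neg h]
  · intro k
    have hdisj : ∀ j ∈ G k, ∀ j' ∈ G k, j ≠ j' → Disjoint (F j) (F j') := by
      intro j _ j' _ hne'
      rw [Finset.disjoint_left]
      intro i hij hij'
      rcases hne'.lt_or_gt with h | h
      · exact lt_irrefl i (blocks_lt hFne hFinc h i hij i hij')
      · exact lt_irrefl i (blocks_lt hFne hFinc h i hij' i hij)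
    rw [Finset.sum_biUnion hdisj]
    rw [← hmu1 k]
    apply Finset.sum_congr rfl
    intro j hj
    have : ∀ i ∈ F j, (if h : ∃ j', i ∈ F j' then mu h.choose * lam i else 0) = mu j * lam i := by
      intro i hi
      have hex : ∃ j', i ∈ F j' := ⟨j, hi⟩
      rw [dif_pos hex]
      congr 2
      by_contra hne'
      rcases (Ne.lt_or_gt hne') with h | h
      · exact lt_irrefl i (blocks_lt hFne hFinc h i hex.choose_spec i hi)
      · exact lt_irrefl i (blocks_lt hFne hFinc h i hi i hex.choose_spec)
    rw [Finset.sum_congr rfl this, ← Finset.mul_sum, hlam1 j, mul_one]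
  · intro k
    have hdisj : ∀ j ∈ G k, ∀ j' ∈ G k, j ≠ j' → Disjoint (F j) (F j') := by
      intro j _ j' _ hne'
      rw [Finset.disjoint_left]
      intro i hij hij'
      rcases hne'.lt_or_gt with h | h
      · exact lt_irrefl i (blocks_lt hFne hFinc h i hij i hij')
      · exact lt_irrefl i (blocks_lt hFne hFinc h i hij' i hij)
    rw [hadef k, Finset.sum_biUnion hdisj]
    apply Finset.sum_congr rfl
    intro j hj
    rw [hbdef j, Finset.smul_sum]
    apply Finset.sum_congr rfl
    intro i hi
    have hex : ∃ j', i ∈ F j' := ⟨j, hi⟩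
    dsimp only
    rw [dif_pos hex]
    have : hex.choose = j := by
      by_contra hne'
      rcases (Ne.lt_or_gt hne') with h | h
      · exact lt_irrefl i (blocks_lt hFne hFinc h i hex.choose_spec i hi)
      · exact lt_irrefl i (blocks_lt hFne hFinc h i hi i hex.choose_spec)
    rw [this, mul_smul]



lemma cb_dual_ge {b : ℕ → E} {f : StrongDual ℝ E} {c : ℝ} (hc : ∀ i, c ≤ f (b i))
    {v : ℕ → E} (hv : IsConvexBlockSeq v b) : ∀ k, c ≤ f (v k) := by
  obtain ⟨F, lam, hFne, hFinc, hlam0, hlam1, hvdef⟩ := hv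
  intro k
  rw [hvdef k, map_sum]
  have : c = ∑ i ∈ F k, lam i * c := by
    rw [← Finset.sum_mul, hlam1 k, one_mul]
  rw [this]
  apply Finset.sum_le_sum
  intro i hi
  rw [map_smul, smul_eq_mul]
  exact mul_le_mul_of_nonneg_left (hc i) (hlam0 i)

/-- A convex block sequence of a sequence satisfying the basic-sequence
inequality satisfies it with the same constant. -/
lemma cb_basic_ineq {K : ℝ} {b : ℕ → E}
    (hK : ∀ m n : ℕ, m ≤ n → ∀ a : ℕ → ℝ,
      ‖∑ i ∈ Finset.range m, a i • b i‖ ≤ K * ‖∑ i ∈ Finset.range n, a i • b i‖)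
    {v : ℕ → E} (hv : IsConvexBlockSeq v b) :
    ∀ m n : ℕ, m ≤ n → ∀ a : ℕ → ℝ,
      ‖∑ k ∈ Finset.range m, a k • v k‖ ≤ K * ‖∑ k ∈ Finset.range n, a k • v k‖ := by
  classical
  obtain ⟨F, lam, hFne, hFinc, hlam0, hlam1, hvdef⟩ := hv
  intro m n hmn a
  set M : ℕ → ℕ := fun m' => if m' = 0 then 0 else (F (m'-1)).max' (hFne _) + 1 with hM
  set c : ℕ → ℝ := fun i => ∑ k ∈ Finset.range n, if i ∈ F k then a k * lam i else 0 with hc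
  have fact1 : ∀ m' k : ℕ, k < m' → Finset.range (M m') ∩ F k = F k := by
    intro m' k hk
    apply Finset.inter_eq_right.2
    intro i hi
    rw [Finset.mem_range, hM]
    have hm0 : m' ≠ 0 := by omega
    simp only [if_neg hm0]
    have : i ≤ (F (m'-1)).max' (hFne _) := by
      rcases eq_or_lt_of_le (Nat.le_sub_one_of_lt hk) with h | h
      · exact Finset.le_max' _ i (h ▸ hi)
      · exact (blocks_lt hFne hFinc h i hi _ (Finset.max'_mem _ _)).le
    omega
  have fact2 : ∀ m' k : ℕ, m' ≤ k → Finset.range (M m') ∩ F k = ∅ := by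
    intro m' k hk
    rcases Nat.eq_zero_or_pos m' with h | h
    · rw [hM]; simp [h]
    · apply Finset.eq_empty_iff_forall_notMem.2
      intro i hi
      obtain ⟨hi1, hi2⟩ := Finset.mem_inter.1 hi
      rw [Finset.mem_range] at hi1
      have hMm : M m' = (F (m'-1)).max' (hFne _) + 1 := by
        simp only [hM]
        rw [if_neg (by omega : ¬ m' = 0)]
      rw [hMm] at hi1
      have hlt : (F (m'-1)).max' (hFne _) < i :=
        blocks_lt hFne hFinc (by omega : m'-1 < k) _ (Finset.max'_mem _ _) i hi2
      omega
  have key : ∀ m' : ℕ, m' ≤ n →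
      ∑ k ∈ Finset.range m', a k • v k = ∑ i ∈ Finset.range (M m'), c i • b i := by
    intro m' hm'
    have step1 : ∑ i ∈ Finset.range (M m'), c i • b i
        = ∑ k ∈ Finset.range n, ∑ i ∈ Finset.range (M m') ∩ F k, (a k * lam i) • b i :=
      calc ∑ i ∈ Finset.range (M m'), c i • b i
          = ∑ i ∈ Finset.range (M m'), ∑ k ∈ Finset.range n,
              (if i ∈ F k then (a k * lam i) • b i else 0) := by
            apply Finset.sum_congr rfl
            intro i _
            rw [hc]
            dsimp only
            rw [Finset.sum_smul]
            exact Finset.sum_congr rfl fun k _ => by rw [ite_smul, zero_smul]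
        _ = ∑ k ∈ Finset.range n, ∑ i ∈ Finset.range (M m'),
              (if i ∈ F k then (a k * lam i) • b i else 0) := Finset.sum_comm
        _ = ∑ k ∈ Finset.range n, ∑ i ∈ Finset.range (M m') ∩ F k, (a k * lam i) • b i := by
            exact Finset.sum_congr rfl fun k _ => Finset.sum_ite_mem _ _ _
    rw [step1]
    rw [← Finset.sum_subset (Finset.range_subset_range.2 hm')
      (fun k _ hk' => by
        rw [fact2 m' k (Nat.le_of_not_lt fun h => hk' (Finset.mem_range.2 h)), Finset.sum_empty])]
    apply Finset.sum_congr rfl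
    intro k hk
    rw [fact1 m' k (Finset.mem_range.1 hk), hvdef k, Finset.smul_sum]
    exact Finset.sum_congr rfl fun i _ => (mul_smul _ _ _).symm
  have hMle : M m ≤ M n := by
    rcases Nat.eq_zero_or_pos m with h | h
    · rw [hM]; simp [h]
    · have hn0 : n ≠ 0 := by omega
      rw [hM]
      simp only [if_neg (by omega : m ≠ 0), if_neg hn0]
      rcases eq_or_lt_of_le hmn with h' | h'
      · subst h'; exact le_rfl
      · have := blocks_lt hFne hFinc (by omega : m - 1 < n - 1)
          _ (Finset.max'_mem (F (m-1)) (hFne _)) _ (Finset.max'_mem (F (n-1)) (hFne _))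
        omega
  calc ‖∑ k ∈ Finset.range m, a k • v k‖
      = ‖∑ i ∈ Finset.range (M m), c i • b i‖ := by rw [key m hmn]
    _ ≤ K * ‖∑ i ∈ Finset.range (M n), c i • b i‖ := hK (M m) (M n) hMle c
    _ = K * ‖∑ k ∈ Finset.range n, a k • v k‖ := by rw [← key n le_rfl]



/-- Small-perturbation principle. -/
lemma perturb {K δ : ℝ} (hK1 : 1 ≤ K) (hδ : 0 < δ) {v u : ℕ → E}
    (hb : ∀ m n : ℕ, m ≤ n → ∀ a : ℕ → ℝ,
      ‖∑ i ∈ Finset.range m, a i • v i‖ ≤ K * ‖∑ i ∈ Finset.range n, a i • v i‖)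
    (hlb : ∀ k, δ ≤ ‖v k‖)
    (herr : ∀ n : ℕ, ∑ k ∈ Finset.range n, ‖u k - v k‖ ≤ δ / (4*K)) :
    SeqEquiv 2 v u := by
  have hK0 : (0:ℝ) < K := lt_of_lt_of_le one_pos hK1
  intro m a
  set A := ‖∑ i ∈ Finset.range m, a i • v i‖ with hA
  have hA0 : 0 ≤ A := norm_nonneg _
  have hcoef : ∀ k, k < m → |a k| ≤ (2*K/δ) * A := by
    intro k hk
    have h1 : ‖∑ i ∈ Finset.range (k+1), a i • v i‖ ≤ K * A := hb (k+1) m hk a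
    have h2 : ‖∑ i ∈ Finset.range k, a i • v i‖ ≤ K * A := hb k m hk.le a
    have heq : a k • v k
        = ∑ i ∈ Finset.range (k+1), a i • v i - ∑ i ∈ Finset.range k, a i • v i := by
      rw [Finset.sum_range_succ]; abel
    have hnorm : ‖a k • v k‖ ≤ 2 * (K * A) := by
      rw [heq]
      calc ‖_ - _‖ ≤ ‖∑ i ∈ Finset.range (k+1), a i • v i‖
          + ‖∑ i ∈ Finset.range k, a i • v i‖ := norm_sub_le _ _
        _ ≤ 2 * (K * A) := by linarith
    rw [norm_smul, Real.norm_eq_abs] at hnorm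
    have : |a k| * δ ≤ 2 * (K * A) :=
      le_trans (mul_le_mul_of_nonneg_left (hlb k) (abs_nonneg _)) hnorm
    rw [div_mul_eq_mul_div, le_div_iff₀ hδ]
    linarith
  have hdiff : ‖∑ i ∈ Finset.range m, a i • u i - ∑ i ∈ Finset.range m, a i • v i‖
      ≤ (1/2) * A := by
    have heq : ∑ i ∈ Finset.range m, a i • u i - ∑ i ∈ Finset.range m, a i • v i
        = ∑ i ∈ Finset.range m, a i • (u i - v i) := by
      rw [← Finset.sum_sub_distrib]
      exact Finset.sum_congr rfl fun i _ => (smul_sub _ _ _).symm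
    rw [heq]
    calc ‖∑ i ∈ Finset.range m, a i • (u i - v i)‖
        ≤ ∑ i ∈ Finset.range m, ‖a i • (u i - v i)‖ := norm_sum_le _ _
      _ ≤ ∑ i ∈ Finset.range m, (2*K/δ) * A * ‖u i - v i‖ := by
          apply Finset.sum_le_sum
          intro i hi
          rw [norm_smul, Real.norm_eq_abs]
          exact mul_le_mul_of_nonneg_right (hcoef i (Finset.mem_range.1 hi)) (norm_nonneg _)
      _ = (2*K/δ) * A * ∑ i ∈ Finset.range m, ‖u i - v i‖ := by rw [Finset.mul_sum]
      _ ≤ (2*K/δ) * A * (δ / (4*K)) := by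
          apply mul_le_mul_of_nonneg_left (herr m) (by positivity)
      _ = (1/2) * A := by field_simp; ring
  constructor
  · rw [norm_sub_rev] at hdiff
    have h2 := norm_sub_norm_le (∑ i ∈ Finset.range m, a i • v i) (∑ i ∈ Finset.range m, a i • u i)
    have := le_trans h2 hdiff
    linarith
  · have h2 := norm_sub_norm_le (∑ i ∈ Finset.range m, a i • u i) (∑ i ∈ Finset.range m, a i • v i)
    have := le_trans h2 hdiff
    linarith


lemma block_rec {z : ℕ → E} (hz : WeakLim z 0) {T : ℝ} (hT : 0 < T) :
    ∃ (Fb : ℕ → Finset ℕ) (lamb : ℕ → ℕ → ℝ),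
      (∀ j, (Fb j).Nonempty) ∧
      (∀ j, ∀ i ∈ Fb j, ∀ i' ∈ Fb (j+1), i < i') ∧
      (∀ j i, 0 ≤ lamb j i) ∧
      (∀ j, ∑ i ∈ Fb j, lamb j i = 1) ∧
      (∀ j, ‖∑ i ∈ Fb j, lamb j i • z i‖ ≤ T / 2^(j+1)) := by
  classical
  have hε : ∀ j : ℕ, (0:ℝ) < T / 2^(j+1) := fun j => by positivity
  have hex : ∀ N j : ℕ, ∃ p : Finset ℕ × (ℕ → ℝ), p.1.Nonempty ∧ (∀ i ∈ p.1, N ≤ i) ∧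
      (∀ i, 0 ≤ p.2 i) ∧ (∑ i ∈ p.1, p.2 i = 1) ∧ ‖∑ i ∈ p.1, p.2 i • z i‖ ≤ T/2^(j+1) := by
    intro N j
    obtain ⟨F, lam, h1, h2, h3, h4, h5⟩ := mazur hz (hε j) N
    exact ⟨(F, lam), h1, h2, h3, h4, h5⟩
  choose P hP1 hP2 hP3 hP4 hP5 using hex
  set b : ℕ → ℕ := fun j => Nat.rec 0 (fun j bj => (P bj j).1.max' (hP1 bj j) + 1) j with hb
  have hbsucc : ∀ j, b (j+1) = (P (b j) j).1.max' (hP1 (b j) j) + 1 := by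
    intro j
    rw [hb]
  refine ⟨fun j => (P (b j) j).1, fun j => (P (b j) j).2,
    fun j => hP1 _ _, ?_, fun j i => hP3 _ _ i, fun j => hP4 _ _, fun j => hP5 _ _⟩
  intro j i hi i' hi'
  have h1 : i ≤ (P (b j) j).1.max' (hP1 (b j) j) := Finset.le_max' _ i hi
  have h2 : b (j+1) ≤ i' := hP2 _ _ i' hi'
  rw [hbsucc j] at h2
  omega

end SU14

/-- property (su) passes to closed linear subspaces. -/
theorem propertySU_of_closedSubspace
    {X : Type*} [NormedAddCommGroup X] [NormedSpace ℝ X] [CompleteSpace X]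
    (hsu : PropertySU X) (Y : Submodule ℝ X) (hY : IsClosed (Y : Set X)) :
    PropertySU Y := by
  classical
  intro x hxwc hxnw
  set xX : ℕ → X := fun n => (x n : X) with hxXdef
  have hxXwc : WeakCauchySeq xX := by
    intro f
    obtain ⟨l, hl⟩ := hxwc (f.comp Y.subtypeL)
    exact ⟨l, hl⟩
  have hxXnw : ¬ ∃ z : X, WeakLim xX z := by
    rintro ⟨z, hz⟩
    have hzY : z ∈ Y := by
      by_contra hzY
      obtain ⟨f, c', hfc, hcz⟩ := geometric_hahn_banach_closed_point Y.convex hY hzY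
      obtain ⟨n, hn⟩ := ((hz f).eventually (eventually_gt_nhds hcz)).exists
      exact absurd (hfc (xX n) (x n).2) (not_lt.2 hn.le)
    apply hxnw
    refine ⟨⟨z, hzY⟩, ?_⟩
    intro g
    obtain ⟨G, hG, -⟩ := exists_extension_norm_eq Y g
    have h2 : G z = g ⟨z, hzY⟩ := hG ⟨z, hzY⟩
    have h3 := hz G
    rw [h2] at h3
    exact h3.congr fun n => hG (x n)
  obtain ⟨w, hwcbs, hwlim0⟩ := hsu xX hxXwc hxXnw
  obtain ⟨⟨𝒦, hwne, h𝒦1, h𝒦ineq⟩, L, hLpos, φ, hφ, hblk⟩ := hwcbs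
  have h𝒦0 : (0:ℝ) < 𝒦 := lt_of_lt_of_le one_pos h𝒦1
  -- w is weak Cauchy
  have hwwc : WeakCauchySeq w := by
    intro f
    obtain ⟨l, hl⟩ := hxXwc f
    refine ⟨l, ?_⟩
    have h0 := hwlim0 f
    rw [map_zero] at h0
    have h1 : Tendsto (fun n => f (xX n) - f (xX n - w n)) atTop (𝓝 (l - 0)) := hl.sub h0
    rw [sub_zero] at h1
    exact h1.congr fun n => by rw [map_sub]; ring
  choose wlim hwlim using hwwc
  have hfex : ∃ f : StrongDual ℝ X, wlim f ≠ 0 := by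
    by_contra hall
    push_neg at hall
    apply hxXnw
    refine ⟨0, ?_⟩
    intro f
    rw [map_zero]
    have h0 := hwlim0 f
    rw [map_zero] at h0
    have hw0 : Tendsto (fun n => f (w n)) atTop (𝓝 0) := by
      have := hwlim f
      rwa [hall f] at this
    have h1 := h0.add hw0
    rw [add_zero] at h1
    exact h1.congr fun n => by rw [map_sub]; ring
  obtain ⟨f₁, hf₁⟩ := hfex
  obtain ⟨f₀, c, hc, hNev⟩ : ∃ (f₀ : StrongDual ℝ X) (c : ℝ), 0 < c ∧
      ∀ᶠ n in atTop, c ≤ f₀ (w n) := by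
    rcases hf₁.lt_or_gt with h | h
    · refine ⟨-f₁, -(wlim f₁)/2, by linarith, ?_⟩
      have h1 : Tendsto (fun n => -(f₁ (w n))) atTop (𝓝 (-(wlim f₁))) := (hwlim f₁).neg
      have h2 : ∀ᶠ n in atTop, -(wlim f₁)/2 ≤ -(f₁ (w n)) :=
        h1.eventually (eventually_ge_nhds (by linarith))
      exact h2.mono (fun n hn => by simpa only [ContinuousLinearMap.neg_apply] using hn)
    · exact ⟨f₁, (wlim f₁)/2, by linarith,
        (hwlim f₁).eventually (eventually_ge_nhds (by linarith))⟩
  obtain ⟨N₁, hN₁⟩ := eventually_atTop.1 hNev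
  set φ' : ℕ → ℕ := fun n => φ (n + N₁) with hφ'def
  have hφ' : StrictMono φ' := fun a b hab => hφ (by omega)
  set y : ℕ → X := fun n => w (φ' n) with hydef
  have hfy : ∀ i, c ≤ f₀ (y i) := by
    intro i
    apply hN₁
    calc N₁ ≤ i + N₁ := Nat.le_add_left _ _
      _ ≤ φ (i + N₁) := hφ.le_apply
  have hf₀pos : 0 < ‖f₀‖ := by
    by_contra h
    push_neg at h
    have h0 : ‖f₀‖ = 0 := le_antisymm h (norm_nonneg _)
    have h2 : |f₀ (y 0)| ≤ ‖f₀‖ * ‖y 0‖ := by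
      simpa [Real.norm_eq_abs] using f₀.le_opNorm (y 0)
    rw [h0, zero_mul] at h2
    have := (hfy 0).trans ((le_abs_self _).trans h2)
    exact absurd this (not_le.2 hc)
  set δ : ℝ := c / ‖f₀‖ with hδdef
  have hδ : 0 < δ := div_pos hc hf₀pos
  set T : ℝ := δ / (4 * 𝒦) with hTdef
  have hT : 0 < T := div_pos hδ (by positivity)
  -- convex blocks of y
  have hycbφ : IsConvexBlockSeq y (w ∘ φ) := SU14.cbs_shift (w ∘ φ) N₁
  have hycb : IsConvexBlockSeq y w := SU14.cbs_trans hycbφ (SU14.cbs_subseq w hφ)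
  have hyineq : ∀ V : ℕ → X, IsConvexBlockSeq V y → ∀ m n : ℕ, m ≤ n → ∀ a : ℕ → ℝ,
      ‖∑ i ∈ Finset.range m, a i • V i‖ ≤ 𝒦 * ‖∑ i ∈ Finset.range n, a i • V i‖ := by
    intro V hV
    exact SU14.cb_basic_ineq (fun m n h a => h𝒦ineq m n h a) (SU14.cbs_trans hV hycb)
  have hlbV : ∀ V : ℕ → X, IsConvexBlockSeq V y → ∀ k, δ ≤ ‖V k‖ := by
    intro V hV k
    have h1 : c ≤ f₀ (V k) := SU14.cb_dual_ge hfy hV k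
    have h2 : |f₀ (V k)| ≤ ‖f₀‖ * ‖V k‖ := by
      simpa [Real.norm_eq_abs] using f₀.le_opNorm (V k)
    rw [hδdef, div_le_iff₀ hf₀pos]
    have := (le_abs_self (f₀ (V k))).trans h2
    nlinarith
  have hshiftV : ∀ V : ℕ → X, IsConvexBlockSeq V y → UnifShiftEquiv L V := by
    intro V hV
    exact hblk V (SU14.cbs_trans hV hycbφ)
  -- weakly null sequence
  set z : ℕ → X := fun i => xX (φ' i) - w (φ' i) with hzdef
  have hz0 : WeakLim z 0 := by
    intro f
    exact (hwlim0 f).comp hφ'.tendsto_atTop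
  -- blocks
  obtain ⟨Fb, lamb, hFbne, hFbinc, hlamb0, hlamb1, herrb⟩ := SU14.block_rec hz0 hT
  have hFbge : ∀ j, ∀ i ∈ Fb j, j ≤ i := SU14.blocks_ge hFbne hFbinc
  -- global weights
  set lam : ℕ → ℝ := fun i => ∑ j ∈ Finset.range (i+1), if i ∈ Fb j then lamb j i else 0
    with hlamdef
  have hlam0 : ∀ i, 0 ≤ lam i := by
    intro i
    apply Finset.sum_nonneg
    intro j _
    by_cases h : i ∈ Fb j
    · rw [if_pos h]; exact hlamb0 j i
    · rw [if_neg h]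
  have hlam_eq : ∀ j, ∀ i ∈ Fb j, lam i = lamb j i := by
    intro j i hi
    rw [hlamdef]
    dsimp only
    rw [Finset.sum_eq_single_of_mem j (Finset.mem_range.2 (Nat.lt_succ_of_le (hFbge j i hi)))]
    · rw [if_pos hi]
    · intro j' _ hjj'
      rw [if_neg]
      intro hi'
      rcases hjj'.lt_or_gt with h | h
      · exact absurd (SU14.blocks_lt hFbne hFbinc h i hi' i hi) (lt_irrefl i)
      · exact absurd (SU14.blocks_lt hFbne hFbinc h i hi i hi') (lt_irrefl i)
  -- definitions of u and v
  set u : ℕ → Y := fun j => ∑ i ∈ Fb j, lamb j i • x (φ' i) with hudef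
  set v : ℕ → X := fun j => ∑ i ∈ Fb j, lamb j i • y i with hvdef
  have hvcb : IsConvexBlockSeq v y := by
    refine ⟨Fb, lam, hFbne, hFbinc, hlam0, ?_, ?_⟩
    · intro j
      rw [← hlamb1 j]
      exact Finset.sum_congr rfl fun i hi => hlam_eq j i hi
    · intro j
      rw [hvdef]
      exact (Finset.sum_congr rfl fun i hi => by rw [hlam_eq j i hi]).symm
  have hcoe_sum : ∀ (q : ℕ → Y) (s : Finset ℕ) (b : ℕ → ℝ),
      ((∑ i ∈ s, b i • q i : Y) : X) = ∑ i ∈ s, b i • (q i : X) := by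
    intro q s b
    show Y.subtype _ = _
    rw [map_sum]
    exact Finset.sum_congr rfl fun i _ => by rw [map_smul]; rfl
  set uX : ℕ → X := fun j => ((u j : X)) with huXdef
  have hucoe : ∀ j, uX j = ∑ i ∈ Fb j, lamb j i • xX (φ' i) := by
    intro j
    rw [huXdef]
    dsimp only
    rw [hudef]
    exact hcoe_sum (fun i => x (φ' i)) (Fb j) (lamb j)
  have herru : ∀ j, ‖uX j - v j‖ ≤ T / 2^(j+1) := by
    intro j
    have heq : uX j - v j = ∑ i ∈ Fb j, lamb j i • z i := by
      rw [hucoe j, hvdef]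
      dsimp only
      rw [← Finset.sum_sub_distrib]
      exact Finset.sum_congr rfl fun i _ => by rw [← smul_sub]
    rw [heq]
    exact herrb j
  have hnormY : ∀ (q : ℕ → Y) (mm : ℕ) (a : ℕ → ℝ),
      ‖∑ i ∈ Finset.range mm, a i • q i‖ = ‖∑ i ∈ Finset.range mm, a i • (q i : X)‖ := by
    intro q mm a
    rw [← hcoe_sum q _ a]
    rfl
  -- error accumulation helper
  have hgeom : ∀ (e : ℕ → ℝ), (∀ k, 0 ≤ e k) → (∀ k, e k ≤ T / 2^(k+1)) →
      ∀ (n p : ℕ), ∑ k ∈ Finset.range n, e (k + p) ≤ δ / (4 * 𝒦) := by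
    intro e he0 heb n p
    have step1 : ∑ k ∈ Finset.range n, e (k+p) ≤ ∑ k ∈ Finset.range n, T/2^(k+1) := by
      apply Finset.sum_le_sum
      intro k _
      refine (heb (k+p)).trans ?_
      apply div_le_div_of_nonneg_left hT.le (by positivity)
      apply pow_le_pow_right₀ (by norm_num)
      omega
    have step2 : ∑ k ∈ Finset.range n, T/2^(k+1) = (T/2) * ∑ k ∈ Finset.range n, (1/2:ℝ)^k := by
      rw [Finset.mul_sum]
      apply Finset.sum_congr rfl
      intro k _
      rw [one_div, inv_pow, pow_succ, div_eq_mul_inv, div_eq_mul_inv, mul_inv]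
      ring
    have step3 : (T/2) * ∑ k ∈ Finset.range n, (1/2:ℝ)^k ≤ (T/2) * 2 :=
      mul_le_mul_of_nonneg_left (sum_geometric_two_le n) (by positivity)
    calc ∑ k ∈ Finset.range n, e (k+p) ≤ (T/2) * 2 := by
          rw [step2] at step1; exact step1.trans step3
      _ = T := by ring
      _ = δ / (4*𝒦) := by rw [hTdef]
  -- the main machinery
  have main : ∀ (G : ℕ → Finset ℕ) (mu : ℕ → ℝ),
      (∀ k, (G k).Nonempty) →
      (∀ k, ∀ j ∈ G k, ∀ j' ∈ G (k+1), j < j') →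
      (∀ j, 0 ≤ mu j) →
      (∀ k, ∑ j ∈ G k, mu j = 1) →
      ∀ p : ℕ, SeqEquiv 2 (fun k => ∑ j ∈ G (k+p), mu j • v j)
        (fun k => ∑ j ∈ G (k+p), mu j • uX j) := by
    intro G mu hGne hGinc hmu0 hmu1 p
    have hVcb : IsConvexBlockSeq (fun k => ∑ j ∈ G k, mu j • v j) v :=
      ⟨G, mu, hGne, hGinc, hmu0, hmu1, fun k => rfl⟩
    have hVy : IsConvexBlockSeq (fun k => ∑ j ∈ G (k+p), mu j • v j) y :=
      SU14.cbs_trans (SU14.cbs_shift (fun k => ∑ j ∈ G k, mu j • v j) p)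
        (SU14.cbs_trans hVcb hvcb)
    have herrV : ∀ k, ‖(∑ j ∈ G k, mu j • uX j) - ∑ j ∈ G k, mu j • v j‖ ≤ T / 2^(k+1) := by
      intro k
      have heq : (∑ j ∈ G k, mu j • uX j) - ∑ j ∈ G k, mu j • v j
          = ∑ j ∈ G k, mu j • (uX j - v j) := by
        rw [← Finset.sum_sub_distrib]
        exact Finset.sum_congr rfl fun j _ => (smul_sub _ _ _).symm
      rw [heq]
      calc ‖∑ j ∈ G k, mu j • (uX j - v j)‖
          ≤ ∑ j ∈ G k, ‖mu j • (uX j - v j)‖ := norm_sum_le _ _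
        _ ≤ ∑ j ∈ G k, mu j * (T / 2^(k+1)) := by
            apply Finset.sum_le_sum
            intro j hj
            rw [norm_smul, Real.norm_eq_abs, abs_of_nonneg (hmu0 j)]
            apply mul_le_mul_of_nonneg_left _ (hmu0 j)
            refine (herru j).trans ?_
            apply div_le_div_of_nonneg_left hT.le (by positivity)
            apply pow_le_pow_right₀ (by norm_num)
            have := SU14.blocks_ge hGne hGinc k j hj
            omega
        _ = T / 2^(k+1) := by rw [← Finset.sum_mul, hmu1 k, one_mul]
    apply SU14.perturb h𝒦1 hδ (hyineq _ hVy) (hlbV _ hVy)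
    intro n
    exact hgeom (fun k => ‖(∑ j ∈ G k, mu j • uX j) - ∑ j ∈ G k, mu j • v j‖)
      (fun k => norm_nonneg _) herrV n p
  -- SeqEquiv 2 v uX
  have huv : SeqEquiv 2 v uX := by
    apply SU14.perturb h𝒦1 hδ (hyineq v hvcb) (hlbV v hvcb)
    intro n
    have := hgeom (fun j => ‖uX j - v j‖) (fun j => norm_nonneg _) herru n 0
    simpa using this
  -- u is nonzero
  have hT4 : T ≤ δ/4 := by
    rw [hTdef]
    apply div_le_div_of_nonneg_left hδ.le (by norm_num)
    nlinarith
  have hune : ∀ j, u j ≠ 0 := by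
    intro j h0
    have h1 : δ ≤ ‖v j‖ := hlbV v hvcb j
    have h2 : ‖uX j - v j‖ ≤ T/2^(j+1) := herru j
    have h3 : uX j = 0 := by rw [huXdef]; dsimp only; rw [h0]; rfl
    rw [h3, zero_sub, norm_neg] at h2
    have hTj : T/2^(j+1) ≤ T := div_le_self hT.le (one_le_pow₀ (by norm_num))
    linarith
  have hbasicu : IsBasicSeq u (2*𝒦*2) := by
    refine ⟨hune, by nlinarith, ?_⟩
    intro m n hmn a
    rw [hnormY u m a, hnormY u n a]
    have hm2 := (huv m a).2
    have hn1 := (huv n a).1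
    have hvmn := hyineq v hvcb m n hmn a
    have e1 : ‖∑ i ∈ Finset.range n, a i • v i‖
        ≤ 2 * ‖∑ i ∈ Finset.range n, a i • uX i‖ := by linarith
    have e2 : 𝒦 * ‖∑ i ∈ Finset.range n, a i • v i‖
        ≤ 𝒦 * (2 * ‖∑ i ∈ Finset.range n, a i • uX i‖) :=
      mul_le_mul_of_nonneg_left e1 h𝒦0.le
    calc ‖∑ i ∈ Finset.range m, a i • (u i : X)‖
        = ‖∑ i ∈ Finset.range m, a i • uX i‖ := rfl
      _ ≤ 2 * ‖∑ i ∈ Finset.range m, a i • v i‖ := hm2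
      _ ≤ 2 * (𝒦 * ‖∑ i ∈ Finset.range n, a i • v i‖) :=
          mul_le_mul_of_nonneg_left hvmn (by norm_num)
      _ ≤ 2*𝒦*2 * ‖∑ i ∈ Finset.range n, a i • (u i : X)‖ := by
          calc 2 * (𝒦 * ‖∑ i ∈ Finset.range n, a i • v i‖)
              ≤ 2 * (𝒦 * (2 * ‖∑ i ∈ Finset.range n, a i • uX i‖)) := by linarith
            _ = 2*𝒦*2 * ‖∑ i ∈ Finset.range n, a i • uX i‖ := by ring
            _ = 2*𝒦*2 * ‖∑ i ∈ Finset.range n, a i • (u i : X)‖ := rfl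
  refine ⟨u, ⟨⟨2*𝒦*2, hbasicu⟩, 2*L*2, by positivity, id, strictMono_id, ?_⟩, ?_⟩
  · -- every convex block of u ∘ id is uniformly (2*L*2)-shift equivalent
    intro W hW
    obtain ⟨G, mu, hGne, hGinc, hmu0, hmu1, hWdef⟩ := hW
    have hWcoe : ∀ k, ((W k : X)) = ∑ j ∈ G k, mu j • uX j := by
      intro k
      rw [hWdef k]
      exact hcoe_sum _ _ _
    intro p
    have hVcb : IsConvexBlockSeq (fun k => ∑ j ∈ G k, mu j • v j) v :=
      ⟨G, mu, hGne, hGinc, hmu0, hmu1, fun k => rfl⟩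
    have hVy : IsConvexBlockSeq (fun k => ∑ j ∈ G k, mu j • v j) y :=
      SU14.cbs_trans hVcb hvcb
    have s1 : SeqEquiv 2 (fun k => ∑ j ∈ G (k+p), mu j • v j)
        (fun k => ∑ j ∈ G (k+p), mu j • uX j) := main G mu hGne hGinc hmu0 hmu1 p
    have s3 : SeqEquiv 2 (fun k => ∑ j ∈ G k, mu j • v j)
        (fun k => ∑ j ∈ G k, mu j • uX j) := main G mu hGne hGinc hmu0 hmu1 0
    have s2 : SeqEquiv L (fun k => (fun k' => ∑ j ∈ G k', mu j • v j) (k+p))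
        (fun k => ∑ j ∈ G k, mu j • v j) := hshiftV _ hVy p
    have s1' := SU14.seqEquiv_symm two_pos s1
    have comb : SeqEquiv (2*L*2) (fun k => ∑ j ∈ G (k+p), mu j • uX j)
        (fun k => ∑ j ∈ G k, mu j • uX j) :=
      SU14.seqEquiv_trans (by positivity) two_pos
        (SU14.seqEquiv_trans two_pos hLpos s1' s2) s3
    intro m a
    have hWn : ‖∑ i ∈ Finset.range m, a i • W (i+p)‖
        = ‖∑ i ∈ Finset.range m, a i • (fun k => ∑ j ∈ G (k+p), mu j • uX j) i‖ := by
      rw [hnormY (fun n => W (n+p)) m a]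
      congr 1
      apply Finset.sum_congr rfl
      intro i _
      rw [hWcoe (i+p)]
    have hW0n : ‖∑ i ∈ Finset.range m, a i • W i‖
        = ‖∑ i ∈ Finset.range m, a i • (fun k => ∑ j ∈ G k, mu j • uX j) i‖ := by
      rw [hnormY W m a]
      congr 1
      apply Finset.sum_congr rfl
      intro i _
      rw [hWcoe i]
    obtain ⟨hc1, hc2⟩ := comb m a
    constructor
    · rw [hWn, hW0n]; exact hc1
    · rw [hWn, hW0n]; exact hc2
  · -- weak limit
    intro g
    rw [map_zero]
    obtain ⟨l, hl⟩ := hxwc g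
    have hgu : Tendsto (fun n => g (u n)) atTop (𝓝 l) := by
      rw [Metric.tendsto_atTop]
      intro ε hε
      obtain ⟨M, hM⟩ := Metric.tendsto_atTop.1 hl (ε/2) (half_pos hε)
      refine ⟨M, fun n hn => ?_⟩
      have hgu_eq : g (u n) = ∑ i ∈ Fb n, lamb n i * g (x (φ' i)) := by
        rw [hudef]
        dsimp only
        rw [map_sum]
        exact Finset.sum_congr rfl fun i _ => by rw [map_smul, smul_eq_mul]
      have hdiff : g (u n) - l = ∑ i ∈ Fb n, lamb n i * (g (x (φ' i)) - l) := by
        rw [hgu_eq]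
        have : ∑ i ∈ Fb n, lamb n i * (g (x (φ' i)) - l)
            = (∑ i ∈ Fb n, lamb n i * g (x (φ' i))) - (∑ i ∈ Fb n, lamb n i) * l := by
          rw [Finset.sum_mul, ← Finset.sum_sub_distrib]
          exact Finset.sum_congr rfl fun i _ => by ring
        rw [this, hlamb1 n, one_mul]
      rw [Real.dist_eq, hdiff]
      calc |∑ i ∈ Fb n, lamb n i * (g (x (φ' i)) - l)|
          ≤ ∑ i ∈ Fb n, |lamb n i * (g (x (φ' i)) - l)| := Finset.abs_sum_le_sum_abs _ _
        _ ≤ ∑ i ∈ Fb n, lamb n i * (ε/2) := by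
            apply Finset.sum_le_sum
            intro i hi
            rw [abs_mul, abs_of_nonneg (hlamb0 n i)]
            apply mul_le_mul_of_nonneg_left _ (hlamb0 n i)
            have hiM : M ≤ φ' i := by
              have h1 : n ≤ i := hFbge n i hi
              have h2 : i ≤ φ' i := hφ'.le_apply
              omega
            have := hM (φ' i) hiM
            rw [Real.dist_eq] at this
            exact this.le
        _ = ε/2 := by rw [← Finset.sum_mul, hlamb1 n, one_mul]
        _ < ε := by linarith
    have h2 : Tendsto (fun n => g (x n) - g (u n)) atTop (𝓝 (l - l)) := hl.sub hgu
    rw [sub_self] at h2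
    exact h2.congr fun n => (map_sub g (x n) (u n)).symm


end
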